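/- For the equation x(0) = x₀, x'(t) = X₃(x∞ - x(t)) with X₃(u) = u + u³, the unique solution is x(t) = x∞ + (x₀ - x∞)/√((e^{2t} - 1)(1 + (x₀ - x∞)²) + 1), and it satisfies |x(t) - x∞| ≤ 1/√(e^{2t} - 1) for all t > 0 and min(0, x₀ - x∞) ≤ x(t) - x∞ ≤ max(0, x₀ - x∞) for all t ≥ 0. -/

import Mathlib

lemma aux_deriv_eq (xinf C s e : ℝ) (hs : s ≠ 0) (h : s ^ 2 = e * (1 + C ^ 2) - C ^ 2) :
    xinf - (xinf + C / s) + (xinf - (xinf + C / s)) ^ 3 =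
      (0 * s - C * (1 / (2 * s) * (e * 2 * (1 + C ^ 2)))) / s ^ 2 := by
  field_simp
  ring_nf
  linear_combination (-C) * h

theorem reach_autonomous_solution (x₀ xinf : ℝ) (xsol : ℝ → ℝ)
    (hxsol : ∀ t, xsol t = xinf + (x₀ - xinf) /
      Real.sqrt ((Real.exp (2 * t) - 1) * (1 + (x₀ - xinf)^2) + 1)) :
    (xsol 0 = x₀ ∧
      ∀ t ≥ (0:ℝ), HasDerivAt xsol ((xinf - xsol t) + (xinf - xsol t)^3) t) ∧
    (∀ x : ℝ → ℝ, x 0 = x₀ →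
      (∀ t ≥ (0:ℝ), HasDerivAt x ((xinf - x t) + (xinf - x t)^3) t) →
      ∀ t ≥ (0:ℝ), x t = xsol t) ∧
    (∀ t > (0:ℝ), |xsol t - xinf| ≤ 1 / Real.sqrt (Real.exp (2 * t) - 1)) ∧
    (∀ t ≥ (0:ℝ), min 0 (x₀ - xinf) ≤ xsol t - xinf ∧
      xsol t - xinf ≤ max 0 (x₀ - xinf)) := by
  set c : ℝ := x₀ - xinf with hc
  set g : ℝ → ℝ := fun t => (Real.exp (2 * t) - 1) * (1 + c ^ 2) + 1 with hg
  have hgpos : ∀ t, 0 ≤ t → 0 < g t := by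
    intro t ht
    have h1 : 1 ≤ Real.exp (2 * t) := Real.one_le_exp (by linarith)
    have := sq_nonneg c
    simp only [hg]
    nlinarith
  -- initial condition
  have h0 : xsol 0 = x₀ := by
    have := hxsol 0
    simp [Real.exp_zero] at this
    simp [this, hc]
  -- derivative of the explicit solution
  have hderiv : ∀ t ≥ (0:ℝ), HasDerivAt xsol ((xinf - xsol t) + (xinf - xsol t)^3) t := by
    intro t ht
    have hgt : 0 < g t := hgpos t ht
    have hs : 0 < Real.sqrt (g t) := Real.sqrt_pos.mpr hgt
    have hsne : Real.sqrt (g t) ≠ 0 := ne_of_gt hs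
    have hs2 : Real.sqrt (g t) ^ 2 = g t := Real.sq_sqrt hgt.le
    -- derivative of g
    have hgd : HasDerivAt g (Real.exp (2 * t) * 2 * (1 + c ^ 2)) t := by
      have he : HasDerivAt (fun t : ℝ => Real.exp (2 * t)) (Real.exp (2 * t) * 2) t := by
        simpa [Function.comp_def] using (Real.hasDerivAt_exp (2 * t)).comp t ((hasDerivAt_id t).const_mul 2)
      simpa [hg] using ((he.sub_const 1).mul_const (1 + c ^ 2)).add_const 1
    have hsd : HasDerivAt (fun t => Real.sqrt (g t))
        (1 / (2 * Real.sqrt (g t)) * (Real.exp (2 * t) * 2 * (1 + c ^ 2))) t :=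
      (Real.hasDerivAt_sqrt (ne_of_gt hgt)).comp t hgd
    have hdiv : HasDerivAt (fun t => xinf + c / Real.sqrt (g t))
        ((0 * Real.sqrt (g t) - c * (1 / (2 * Real.sqrt (g t)) * (Real.exp (2 * t) * 2 * (1 + c ^ 2)))) / Real.sqrt (g t) ^ 2) t :=
      (((hasDerivAt_const t c).div hsd hsne).const_add xinf)
    have hfun : xsol = fun t => xinf + c / Real.sqrt (g t) := funext fun t => hxsol t
    rw [hfun]
    convert hdiv using 1
    have hgexp : Real.sqrt (g t) ^ 2 = Real.exp (2 * t) * (1 + c ^ 2) - c ^ 2 := by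
      rw [hs2]; simp only [hg]; ring
    exact aux_deriv_eq xinf c (Real.sqrt (g t)) (Real.exp (2 * t)) hsne hgexp
  refine ⟨⟨h0, hderiv⟩, ?_, ?_, ?_⟩
  · -- uniqueness
    intro x hx0 hx t ht
    set h : ℝ → ℝ := fun t => (x t - xsol t) ^ 2 with hh
    have hhd : ∀ s ≥ (0:ℝ), HasDerivAt h
        (2 * (x s - xsol s) * (((xinf - x s) + (xinf - x s)^3) - ((xinf - xsol s) + (xinf - xsol s)^3))) s := by
      intro s hs
      have := ((hx s hs).sub (hderiv s hs)).pow 2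
      simpa [hh, mul_comm, mul_assoc, mul_left_comm, Pi.pow_def, Pi.sub_def] using this
    have hanti : AntitoneOn h (Set.Ici (0:ℝ)) := by
      apply antitoneOn_of_deriv_nonpos (convex_Ici 0)
      · intro s hs
        exact ((hhd s hs).continuousAt).continuousWithinAt
      · intro s hs
        rw [interior_Ici] at hs
        exact ((hhd s (le_of_lt hs)).differentiableAt).differentiableWithinAt
      · intro s hs
        rw [interior_Ici] at hs
        rw [(hhd s (le_of_lt hs)).deriv]
        nlinarith [sq_nonneg (x s - xsol s), sq_nonneg ((xinf - x s) + (xinf - xsol s)), sq_nonneg ((xinf - x s) - (xinf - xsol s))]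
    have h0' : h 0 = 0 := by simp [hh, hx0, h0]
    have hle : h t ≤ 0 := h0' ▸ hanti (Set.self_mem_Ici) ht ht
    have hge : 0 ≤ h t := sq_nonneg _
    have : (x t - xsol t) ^ 2 = 0 := le_antisymm hle hge
    have := pow_eq_zero_iff (n := 2) (by norm_num) |>.mp this
    linarith [sub_eq_zero.mp this]
  · -- decay bound
    intro t ht
    have hgt : 0 < g t := hgpos t ht.le
    have he : 0 < Real.exp (2 * t) - 1 := by
      have h2 := Real.exp_lt_exp.mpr (show (0:ℝ) < 2 * t by linarith)
      rw [Real.exp_zero] at h2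
      linarith
    have hse : 0 < Real.sqrt (Real.exp (2 * t) - 1) := Real.sqrt_pos.mpr he
    have hsg : 0 < Real.sqrt (g t) := Real.sqrt_pos.mpr hgt
    have habs : |xsol t - xinf| = |c| / Real.sqrt (g t) := by
      rw [hxsol t, show (Real.exp (2 * t) - 1) * (1 + c ^ 2) + 1 = g t from rfl,
        show xinf + c / Real.sqrt (g t) - xinf = c / Real.sqrt (g t) by ring,
        abs_div, abs_of_nonneg (Real.sqrt_nonneg _)]
    rw [habs, div_le_div_iff₀ hsg hse]
    have : |c| * Real.sqrt (Real.exp (2 * t) - 1) = Real.sqrt (c ^ 2 * (Real.exp (2 * t) - 1)) := by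
      rw [Real.sqrt_mul (sq_nonneg c), Real.sqrt_sq_eq_abs]
    rw [this]
    have hle : c ^ 2 * (Real.exp (2 * t) - 1) ≤ g t := by simp [hg]; nlinarith [Real.exp_pos (2*t)]
    calc Real.sqrt (c ^ 2 * (Real.exp (2 * t) - 1)) ≤ Real.sqrt (g t) := Real.sqrt_le_sqrt hle
      _ ≤ 1 * Real.sqrt (g t) := by rw [one_mul]
  · -- min/max bounds
    intro t ht
    have hgt : 0 < g t := hgpos t ht
    have hg1 : 1 ≤ g t := by
      have h1 : 1 ≤ Real.exp (2 * t) := Real.one_le_exp (by linarith)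
      simp [hg]; nlinarith [sq_nonneg c]
    have hs1 : 1 ≤ Real.sqrt (g t) := by
      rw [show (1:ℝ) = Real.sqrt 1 by simp]
      exact Real.sqrt_le_sqrt hg1
    have hsp : 0 < Real.sqrt (g t) := by linarith
    rw [hxsol t, show (Real.exp (2 * t) - 1) * (1 + c ^ 2) + 1 = g t from rfl,
      show xinf + c / Real.sqrt (g t) - xinf = c / Real.sqrt (g t) by ring]
    rcases le_or_gt 0 c with hcpos | hcneg
    · constructor
      · exact le_trans (min_le_left _ _) (div_nonneg hcpos hsp.le)
      · refine le_trans ?_ (le_max_right _ _)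
        rw [div_le_iff₀ hsp]
        nlinarith
    · constructor
      · refine le_trans (min_le_right _ _) ?_
        rw [le_div_iff₀ hsp]
        nlinarith
      · exact le_trans (div_nonpos_of_nonpos_of_nonneg hcneg.le hsp.le) (le_max_left _ _)
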